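/- arXiv:quant-ph/0006071 — 2 statements merged into one kernel-verified Lean document; each statement's English description precedes it below -/
import Mathlib

section
/- A state ρ on H₁ ⊗ ... ⊗ Hₙ (finite-dimensional) is n-partite separable if and only if Tr(A ρ) ≥ 0 for every Hermitian operator A satisfying Tr(A (P₁ ⊗ ... ⊗ Pₙ)) ≥ 0 for all rank-one projections Pᵢ on Hᵢ. -/
open Matrix
open scoped ComplexOrder

noncomputable section

/-- A state: positive semidefinite with trace one. -/
def IsState {n : Type*} [Fintype n] (ρ : Matrix n n ℂ) : Prop :=
  ρ.PosSemidef ∧ ρ.trace = 1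

/-- Tensor product of a family of matrices `M i` on `H i`, as a matrix on
`H₁ ⊗ ... ⊗ Hₙ`. -/
def famTensor {n : ℕ} {d : Fin n → ℕ} (M : ∀ i, Matrix (Fin (d i)) (Fin (d i)) ℂ) :
    Matrix (∀ i, Fin (d i)) (∀ i, Fin (d i)) ℂ :=
  Matrix.of fun f g => ∏ i, M i (f i) (g i)

/-- An n-partite separable state: a convex combination of n-fold product states. -/
def SepN {n : ℕ} {d : Fin n → ℕ} (ρ : Matrix (∀ i, Fin (d i)) (∀ i, Fin (d i)) ℂ) : Prop :=
  ∃ (k : ℕ) (p : Fin k → ℝ) (σ : Fin k → ∀ i, Matrix (Fin (d i)) (Fin (d i)) ℂ),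
    (∀ j, 0 ≤ p j) ∧ (∑ j, p j = 1) ∧ (∀ j i, IsState (σ j i)) ∧
    ρ = ∑ j, (p j : ℂ) • famTensor (σ j)

/-- A rank-one (orthogonal) projection `|v⟩⟨v|`, `v` a unit vector. -/
def IsRankOneProj {m : Type*} [Fintype m] (P : Matrix m m ℂ) : Prop :=
  ∃ v : m → ℂ, star v ⬝ᵥ v = 1 ∧ P = Matrix.vecMulVec v (star v)

-- ############ auxiliary lemmas ############

section Aux

/-- real coercion smul on complex matrices -/
lemma coe_smul_mat {m : Type*} [Fintype m] (r : ℝ) (M : Matrix m m ℂ) :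
    (r : ℂ) • M = r • M := by
  ext a b
  simp [Matrix.smul_apply, Complex.real_smul]

lemma IsRankOneProj.isState {m : Type*} [Fintype m] [DecidableEq m] {P : Matrix m m ℂ}
    (h : IsRankOneProj P) : IsState P := by
  obtain ⟨v, hv, rfl⟩ := h
  constructor
  · have : vecMulVec v (star v) = replicateCol Unit v * (replicateCol Unit v)ᴴ := by
      rw [vecMulVec_eq Unit, conjTranspose_replicateCol]
    rw [this]
    exact posSemidef_self_mul_conjTranspose _
  · rw [Matrix.trace]
    simpa [Matrix.diag, Matrix.vecMulVec_apply, dotProduct, mul_comm] using hv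

lemma IsRankOneProj.isHermitian {m : Type*} [Fintype m] {P : Matrix m m ℂ}
    (h : IsRankOneProj P) : P.IsHermitian := by
  obtain ⟨v, hv, rfl⟩ := h
  ext a b
  simp [Matrix.conjTranspose_apply, Matrix.vecMulVec_apply, mul_comm]

lemma mul_diagonal_mul_star {m : Type*} [Fintype m] [DecidableEq m]
    (U : Matrix m m ℂ) (c : m → ℂ) :
    U * Matrix.diagonal c * star U
      = ∑ x, c x • Matrix.vecMulVec (fun a => U a x) (star fun a => U a x) := by
  ext a b
  rw [Matrix.mul_assoc]
  simp only [Matrix.mul_apply, Matrix.diagonal_mul, Matrix.sum_apply, Matrix.smul_apply,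
    Matrix.vecMulVec_apply, Matrix.star_apply, Matrix.conjTranspose_apply, Pi.star_apply,
    smul_eq_mul]
  refine Finset.sum_congr rfl fun x _ => ?_
  simp [Matrix.diagonal_apply, ite_mul, Finset.sum_ite_eq]
  ring

/-- Spectral decomposition of a state into rank-one projections. -/
lemma IsState.decomp {m : Type*} [Fintype m] [DecidableEq m] {σ : Matrix m m ℂ}
    (hσ : IsState σ) :
    ∃ (c : m → ℝ) (P : m → Matrix m m ℂ),
      (∀ x, 0 ≤ c x) ∧ (∀ x, IsRankOneProj (P x)) ∧ σ = ∑ x, (c x : ℂ) • P x := by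
  have hH : σ.IsHermitian := hσ.1.1
  set U : Matrix m m ℂ := (hH.eigenvectorUnitary : Matrix m m ℂ) with hU
  have hUU : star U * U = 1 := Matrix.mem_unitaryGroup_iff'.mp hH.eigenvectorUnitary.2
  refine ⟨hH.eigenvalues, fun x => Matrix.vecMulVec (fun a => U a x) (star fun a => U a x),
    fun x => hσ.1.eigenvalues_nonneg x, fun x => ⟨fun a => U a x, ?_, rfl⟩, ?_⟩
  · have := congrArg (fun M => M x x) hUU
    simpa [Matrix.mul_apply, Matrix.conjTranspose_apply, dotProduct,
      Matrix.one_apply] using this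
  · calc σ = U * Matrix.diagonal (RCLike.ofReal ∘ hH.eigenvalues) * star U :=
        hH.spectral_theorem
    _ = ∑ x, ((hH.eigenvalues x : ℂ)) • Matrix.vecMulVec (fun a => U a x) (star fun a => U a x) :=
        mul_diagonal_mul_star U _

/-- Multilinear expansion of `famTensor` over sums. -/
lemma famTensor_sum {n : ℕ} {d : Fin n → ℕ} (c : ∀ i, Fin (d i) → ℝ)
    (P : ∀ i, Fin (d i) → Matrix (Fin (d i)) (Fin (d i)) ℂ) :
    famTensor (fun i => ∑ x, (c i x : ℂ) • P i x)
      = ∑ x : ∀ i, Fin (d i),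
          ((∏ i, c i (x i) : ℝ) : ℂ) • famTensor (fun i => P i (x i)) := by
  ext f g
  simp only [famTensor, Matrix.of_apply, Matrix.sum_apply, Matrix.smul_apply, smul_eq_mul]
  rw [Finset.prod_univ_sum]
  rw [Fintype.piFinset_univ]
  refine Finset.sum_congr rfl fun x _ => ?_
  push_cast
  rw [Finset.prod_mul_distrib]

lemma famTensor_trace {n : ℕ} {d : Fin n → ℕ}
    (P : ∀ i, Matrix (Fin (d i)) (Fin (d i)) ℂ) :
    (famTensor P).trace = ∏ i, (P i).trace := by
  simp only [Matrix.trace, Matrix.diag, famTensor, Matrix.of_apply]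
  rw [Finset.prod_univ_sum, Fintype.piFinset_univ]

lemma famTensor_isHermitian {n : ℕ} {d : Fin n → ℕ}
    {P : ∀ i, Matrix (Fin (d i)) (Fin (d i)) ℂ} (h : ∀ i, (P i).IsHermitian) :
    (famTensor P).IsHermitian := by
  ext f g
  simp only [famTensor, Matrix.conjTranspose_apply, Matrix.of_apply, star_prod]
  exact Finset.prod_congr rfl fun i _ => congrFun (congrFun (h i) (f i)) (g i)

/-- real part of `Tr (A * ∑ r j • M j)`. -/
lemma trace_re_sum_smul {I : Type*} [Fintype I] {k : Type*} [Fintype k]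
    (A : Matrix I I ℂ) (p : k → ℝ) (M : k → Matrix I I ℂ) :
    ((A * ∑ j, (p j : ℂ) • M j).trace).re = ∑ j, p j * ((A * M j).trace).re := by
  rw [Matrix.mul_sum, Matrix.trace_sum, Complex.re_sum]
  refine Finset.sum_congr rfl fun j _ => ?_
  rw [Matrix.mul_smul, Matrix.trace_smul, smul_eq_mul]
  simp [Complex.mul_re]

lemma sepN_trace_nonneg {n : ℕ} {d : Fin n → ℕ}
    {ρ : Matrix (∀ i, Fin (d i)) (∀ i, Fin (d i)) ℂ} (h : SepN ρ)
    (A : Matrix (∀ i, Fin (d i)) (∀ i, Fin (d i)) ℂ)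
    (hAP : ∀ P : ∀ i, Matrix (Fin (d i)) (Fin (d i)) ℂ,
      (∀ i, IsRankOneProj (P i)) → 0 ≤ ((A * famTensor P).trace).re) :
    0 ≤ ((A * ρ).trace).re := by
  classical
  obtain ⟨k, p, σ, hp0, _, hσ, rfl⟩ := h
  rw [trace_re_sum_smul]
  refine Finset.sum_nonneg fun j _ => mul_nonneg (hp0 j) ?_
  have hdec := fun i => (hσ j i).decomp
  choose c P hc0 hP hEq using hdec
  have hrw : famTensor (σ j) = ∑ x : ∀ i, Fin (d i),
      ((∏ i, c i (x i) : ℝ) : ℂ) • famTensor (fun i => P i (x i)) := by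
    rw [show σ j = fun i => ∑ x, (c i x : ℂ) • P i x from funext hEq, famTensor_sum]
  rw [hrw, trace_re_sum_smul]
  exact Finset.sum_nonneg fun x _ =>
    mul_nonneg (Finset.prod_nonneg fun i _ => hc0 i _) (hAP _ fun i => hP i (x i))

/-- The set of tensor products of rank-one projections. -/
def prodProjSet (n : ℕ) (d : Fin n → ℕ) :
    Set (Matrix (∀ i, Fin (d i)) (∀ i, Fin (d i)) ℂ) :=
  {X | ∃ P : ∀ i, Matrix (Fin (d i)) (Fin (d i)) ℂ,
    (∀ i, IsRankOneProj (P i)) ∧ X = famTensor P}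

lemma sepN_of_mem_convexHull {n : ℕ} {d : Fin n → ℕ}
    {ρ : Matrix (∀ i, Fin (d i)) (∀ i, Fin (d i)) ℂ}
    (h : ρ ∈ convexHull ℝ (prodProjSet n d)) : SepN ρ := by
  classical
  rw [convexHull_eq] at h
  obtain ⟨ι, t, w, z, hw0, hw1, hz, hx⟩ := h
  have hz' : ∀ i : t, ∃ P : ∀ i, Matrix (Fin (d i)) (Fin (d i)) ℂ,
      (∀ i, IsRankOneProj (P i)) ∧ z i = famTensor P := fun i => hz i i.2
  choose P hP1 hP2 using hz'
  let e := t.equivFin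
  refine ⟨t.card, fun j => w (e.symm j), fun j => P (e.symm j),
    fun j => hw0 _ (e.symm j).2, ?_, fun j i => (hP1 (e.symm j) i).isState, ?_⟩
  · rw [Equiv.sum_comp e.symm (fun i : t => w i), Finset.sum_coe_sort t w]
    exact hw1
  · have h1 : t.centerMass w z = ∑ i ∈ t, w i • z i := Finset.centerMass_eq_of_sum_1 t z hw1
    rw [← hx, h1, ← Finset.sum_coe_sort t (fun i => w i • z i),
      ← Equiv.sum_comp e.symm (fun i : t => w i • z i)]
    refine Finset.sum_congr rfl fun j _ => ?_
    rw [hP2, coe_smul_mat]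

lemma sum_dite_lt {β : Type*} [AddCommMonoid β] {c m : ℕ} (hcm : c ≤ m) (G : Fin c → β) :
    (∑ j : Fin m, if h : (j : ℕ) < c then G ⟨j, h⟩ else 0) = ∑ i, G i := by
  set g : ℕ → β := fun j => if h : j < c then G ⟨j, h⟩ else 0 with hg
  have h1 : (∑ j : Fin m, if h : (j : ℕ) < c then G ⟨j, h⟩ else 0)
      = ∑ j ∈ Finset.range m, g j := Fin.sum_univ_eq_sum_range g m
  have h2 : ∑ i : Fin c, G i = ∑ j ∈ Finset.range c, g j := by
    rw [← Fin.sum_univ_eq_sum_range g c]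
    exact Finset.sum_congr rfl fun i _ => by simp [hg, i.isLt]
  rw [h1, h2]
  symm
  apply Finset.sum_subset (Finset.range_subset_range.2 hcm)
  intro j hj hjc
  simp only [Finset.mem_range] at hj hjc
  simp [hg, hjc]

/-- Convex hull of a compact set in a finite-dimensional normed space is compact. -/
lemma myIsCompact_convexHull {E : Type*} [NormedAddCommGroup E] [NormedSpace ℝ E]
    [FiniteDimensional ℝ E] {s : Set E} (hs : IsCompact s) :
    IsCompact (convexHull ℝ s) := by
  classical
  set m := Module.finrank ℝ E + 1 with hm
  set Φ : (Fin m → ℝ) × (Fin m → E) → E := fun p => ∑ j, p.1 j • p.2 j with hΦ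
  have hmap : Continuous Φ :=
    continuous_finset_sum _ fun j _ =>
      (((continuous_apply j).comp continuous_fst).smul
        ((continuous_apply j).comp continuous_snd))
  have hK : IsCompact ((stdSimplex ℝ (Fin m)) ×ˢ (Set.univ.pi fun _ : Fin m => s)) :=
    (isCompact_stdSimplex ℝ _).prod (isCompact_univ_pi fun _ => hs)
  have himg : convexHull ℝ s
      = Φ '' ((stdSimplex ℝ (Fin m)) ×ˢ (Set.univ.pi fun _ : Fin m => s)) := by
    apply Set.Subset.antisymm
    · intro x hx
      rw [convexHull_eq_union] at hx
      simp only [Set.mem_iUnion] at hx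
      obtain ⟨t, hts, hai, hxt⟩ := hx
      have hcard : t.card ≤ m := by
        have h1 := hai.card_le_finrank_succ
        rw [Fintype.card_coe] at h1
        exact h1.trans (add_le_add_left (Submodule.finrank_le _) 1)
      rw [Finset.convexHull_eq] at hxt
      obtain ⟨w, hw0, hw1, hwx⟩ := hxt
      have htne : t.Nonempty := by
        rcases Finset.eq_empty_or_nonempty t with h | h
        · subst h; simp at hw1
        · exact h
      obtain ⟨e0, he0⟩ := htne
      let e := t.equivFin
      set c := t.card with hc
      refine ⟨(fun j => if h : (j : ℕ) < c then w (e.symm ⟨j, h⟩) else 0,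
        fun j => if h : (j : ℕ) < c then (e.symm ⟨j, h⟩ : E) else e0), ⟨⟨?_, ?_⟩, ?_⟩, ?_⟩
      · intro j
        dsimp only
        split_ifs with h
        · exact hw0 _ (e.symm ⟨j, h⟩).2
        · exact le_refl 0
      · rw [sum_dite_lt hcard (fun i => w (e.symm i))]
        rw [Equiv.sum_comp e.symm (fun i : t => w i), Finset.sum_coe_sort t w]
        exact hw1
      · intro j _
        dsimp only
        split_ifs with h
        · exact hts (e.symm ⟨j, h⟩).2
        · exact hts he0
      · show ∑ j, _ = x
        have hsplit : ∀ j : Fin m,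
            (if h : (j : ℕ) < c then w (e.symm ⟨j, h⟩) else 0) •
              (if h : (j : ℕ) < c then ((e.symm ⟨j, h⟩ : t) : E) else e0)
            = if h : (j : ℕ) < c then w (e.symm ⟨j, h⟩) • ((e.symm ⟨j, h⟩ : t) : E) else 0 := by
          intro j
          split_ifs with h
          · rfl
          · exact zero_smul ℝ e0
        calc (∑ j : Fin m, _) = ∑ j : Fin m,
              (if h : (j : ℕ) < c then w (e.symm ⟨j, h⟩) • ((e.symm ⟨j, h⟩ : t) : E) else 0) :=
            Finset.sum_congr rfl fun j _ => hsplit j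
        _ = ∑ i : Fin c, w (e.symm i) • ((e.symm i : t) : E) :=
            sum_dite_lt hcard (fun i => w ((e.symm i : t) : E) • ((e.symm i : t) : E))
        _ = ∑ i : t, w i • (i : E) := Equiv.sum_comp e.symm (fun i : t => w i • (i : E))
        _ = ∑ y ∈ t, w y • y := Finset.sum_coe_sort t (fun y => w y • y)
        _ = t.centerMass w id := (Finset.centerMass_eq_of_sum_1 t id hw1).symm
        _ = x := hwx
    · rintro x ⟨⟨w, z⟩, ⟨hw, hz⟩, rfl⟩
      simp only [Set.mem_pi, Set.mem_univ, forall_true_left] at hz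
      exact Convex.sum_mem (convex_convexHull ℝ s) (fun j _ => hw.1 j) hw.2
        fun j _ => subset_convexHull ℝ s (hz j)
  rw [himg]
  exact hK.image hmap

/-- `star v ⬝ᵥ v = 1` iff `v` is a unit vector of Euclidean space. -/
lemma unit_iff_norm {N : ℕ} (v : EuclideanSpace ℂ (Fin N)) :
    star (WithLp.equiv 2 _ v) ⬝ᵥ (WithLp.equiv 2 _ v) = 1 ↔ ‖v‖ = 1 := by
  rw [show star (WithLp.equiv 2 _ v) ⬝ᵥ (WithLp.equiv 2 _ v) = inner ℂ v v from dotProduct_comm _ _,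
    inner_self_eq_norm_sq_to_K]
  constructor
  · intro h
    have h2 : (‖v‖ : ℂ) ^ 2 = 1 := h
    have h3 : (‖v‖ : ℝ) ^ 2 = 1 := by exact_mod_cast h2
    nlinarith [norm_nonneg v]
  · intro h; rw [h]; norm_num

/-- Representation of a real-linear functional on complex matrices by a Hermitian matrix,
on Hermitian arguments. -/
lemma exists_hermitian_rep {I : Type*} [Fintype I] [DecidableEq I]
    (f : Matrix I I ℂ →L[ℝ] ℝ) :
    ∃ A : Matrix I I ℂ, A.IsHermitian ∧
      ∀ M : Matrix I I ℂ, M.IsHermitian → ((A * M).trace).re = f M := by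
  classical
  set E : I → I → Matrix I I ℂ := fun a b => Matrix.single a b 1 with hE
  set B : Matrix I I ℂ := Matrix.of fun a b =>
    ((f (E b a) : ℂ) - Complex.I * (f (Complex.I • E b a) : ℂ)) with hB
  have hB' : ∀ M : Matrix I I ℂ, ((B * M).trace).re = f M := by
    intro M
    have hM : M = ∑ a : I, ∑ b : I, (M a b) • E a b := by
      conv_lhs => rw [Matrix.matrix_eq_sum_single M]
      refine Finset.sum_congr rfl fun a _ => Finset.sum_congr rfl fun b _ => ?_
      rw [hE]; rw [Matrix.smul_single]; rw [smul_eq_mul, mul_one]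
    have hsmul : ∀ (z : ℂ) (X : Matrix I I ℂ),
        z • X = (z.re : ℝ) • X + (z.im : ℝ) • (Complex.I • X) := by
      intro z X
      ext a b
      simp only [Matrix.smul_apply, Matrix.add_apply, Complex.real_smul, smul_eq_mul]
      rw [← mul_assoc]
      rw [← add_mul]
      rw [Complex.re_add_im]
    have hfM : f M = ∑ a : I, ∑ b : I,
        ((M a b).re * f (E a b) + (M a b).im * f (Complex.I • E a b)) := by
      conv_lhs => rw [hM]
      rw [map_sum]
      refine Finset.sum_congr rfl fun a _ => ?_
      rw [map_sum]
      refine Finset.sum_congr rfl fun b _ => ?_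
      rw [hsmul (M a b) (E a b), map_add, f.map_smul, f.map_smul, smul_eq_mul, smul_eq_mul]
    rw [hfM]
    rw [Matrix.trace]
    simp only [Matrix.diag, Matrix.mul_apply, hB, Matrix.of_apply]
    rw [Complex.re_sum]
    rw [Finset.sum_comm]
    refine Finset.sum_congr rfl fun a _ => ?_
    rw [Complex.re_sum]
    refine Finset.sum_congr rfl fun b _ => ?_
    simp [sub_mul, Complex.mul_re, Complex.mul_im]
    ring
  refine ⟨(2⁻¹ : ℝ) • (B + Bᴴ), ?_, ?_⟩
  · show _ = _
    rw [Matrix.conjTranspose_smul, Matrix.conjTranspose_add, Matrix.conjTranspose_conjTranspose]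
    rw [star_trivial]
    rw [add_comm]
  · intro M hM
    have key : ((Bᴴ * M).trace) = star ((B * M).trace) := by
      conv_lhs => rw [← hM.eq]
      rw [← Matrix.conjTranspose_mul, Matrix.trace_conjTranspose, Matrix.trace_mul_comm]
    rw [Matrix.smul_mul, Matrix.add_mul, Matrix.trace_smul, Matrix.trace_add, key]
    have h2 : ((2⁻¹:ℝ) • ((B * M).trace + star ((B * M).trace))).re
        = ((B * M).trace).re := by
      simp [Complex.star_def, Complex.add_conj, Complex.real_smul, ← Complex.ofReal_mul]
    rw [h2, hB' M]

end Aux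

section WithNorm

attribute [local instance] Matrix.normedAddCommGroup Matrix.normedSpace

lemma isCompact_prodProjSet (n : ℕ) (d : Fin n → ℕ) :
    IsCompact (prodProjSet n d) := by
  classical
  set Φ : (∀ i, EuclideanSpace ℂ (Fin (d i))) → Matrix (∀ i, Fin (d i)) (∀ i, Fin (d i)) ℂ :=
    fun v => famTensor (fun i => Matrix.vecMulVec (WithLp.equiv 2 _ (v i))
      (star (WithLp.equiv 2 _ (v i)))) with hΦ
  have hcont : Continuous Φ := by
    apply continuous_matrix
    intro F G
    show Continuous fun v : ∀ i, EuclideanSpace ℂ (Fin (d i)) =>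
      ∏ i, (Matrix.vecMulVec (WithLp.equiv 2 _ (v i)) (star (WithLp.equiv 2 _ (v i)))) (F i) (G i)
    apply continuous_finset_prod
    intro i _
    show Continuous fun v : ∀ i, EuclideanSpace ℂ (Fin (d i)) =>
      (WithLp.equiv 2 _ (v i)) (F i) * star ((WithLp.equiv 2 _ (v i)) (G i))
    exact (((EuclideanSpace.proj (F i)).continuous.comp (continuous_apply i))).mul
      (Complex.continuous_conj.comp
        ((EuclideanSpace.proj (G i)).continuous.comp (continuous_apply i)))
  have hK : IsCompact (Set.univ.pi fun i => Metric.sphere (0 : EuclideanSpace ℂ (Fin (d i))) 1) :=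
    isCompact_univ_pi fun i => isCompact_sphere _ _
  have himg : prodProjSet n d
      = Φ '' (Set.univ.pi fun i => Metric.sphere (0 : EuclideanSpace ℂ (Fin (d i))) 1) := by
    apply Set.Subset.antisymm
    · rintro X ⟨P, hP, rfl⟩
      choose v hv hPv using hP
      refine ⟨fun i => (WithLp.equiv 2 _).symm (v i), ?_, ?_⟩
      · intro i _
        rw [mem_sphere_zero_iff_norm, ← unit_iff_norm]
        simpa using hv i
      · refine congrArg famTensor (funext fun j => ?_)
        simp only [Equiv.apply_symm_apply]
        exact (hPv j).symm
    · rintro X ⟨v, hv, rfl⟩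
      refine ⟨_, fun i => ⟨WithLp.equiv 2 _ (v i), ?_, rfl⟩, rfl⟩
      rw [unit_iff_norm]
      have := hv i (Set.mem_univ i)
      rwa [mem_sphere_zero_iff_norm] at this
  rw [himg]
  exact hK.image hcont

/-- Theorem 1: a state `ρ` is n-partite separable iff `Tr(Aρ) ≥ 0` for every
Hermitian `A` with nonnegative expectation on all product projections. -/
theorem stmt11 {n : ℕ} {d : Fin n → ℕ}
    (ρ : Matrix (∀ i, Fin (d i)) (∀ i, Fin (d i)) ℂ) (hρ : IsState ρ) :
    SepN ρ ↔
      ∀ A : Matrix (∀ i, Fin (d i)) (∀ i, Fin (d i)) ℂ, A.IsHermitian →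
        (∀ P : ∀ i, Matrix (Fin (d i)) (Fin (d i)) ℂ,
          (∀ i, IsRankOneProj (P i)) → 0 ≤ ((A * famTensor P).trace).re) →
        0 ≤ ((A * ρ).trace).re := by
  classical
  constructor
  · intro h A _ hAP
    exact sepN_trace_nonneg h A hAP
  · intro hyp
    by_contra hsep
    have hhull : ρ ∉ convexHull ℝ (prodProjSet n d) := fun h => hsep (sepN_of_mem_convexHull h)
    have hclosed : IsClosed (convexHull ℝ (prodProjSet n d)) :=
      (myIsCompact_convexHull (isCompact_prodProjSet n d)).isClosed
    haveI : LocallyConvexSpace ℝ (Matrix (∀ i, Fin (d i)) (∀ i, Fin (d i)) ℂ) :=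
      NormedSpace.toLocallyConvexSpace
    obtain ⟨f, u, hfρ, hfT⟩ :=
      geometric_hahn_banach_point_closed (convex_convexHull ℝ _) hclosed hhull
    obtain ⟨A, hA, hrep⟩ := exists_hermitian_rep f
    set A' : Matrix (∀ i, Fin (d i)) (∀ i, Fin (d i)) ℂ
      := A - (u : ℂ) • (1 : Matrix (∀ i, Fin (d i)) (∀ i, Fin (d i)) ℂ) with hA'
    have hermA' : A'.IsHermitian := by
      refine hA.sub ?_
      show _ = _
      rw [Matrix.conjTranspose_smul, Matrix.conjTranspose_one, Complex.star_def,
        Complex.conj_ofReal]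
    have htr : ∀ X : Matrix (∀ i, Fin (d i)) (∀ i, Fin (d i)) ℂ, X.IsHermitian → X.trace = 1 →
        ((A' * X).trace).re = f X - u := by
      intro X hX htrX
      rw [hA', Matrix.sub_mul, Matrix.trace_sub, Matrix.smul_mul, Matrix.one_mul,
        Matrix.trace_smul, htrX, Complex.sub_re, hrep X hX]
      simp [Complex.real_smul]
    have hpos : ∀ P : ∀ i, Matrix (Fin (d i)) (Fin (d i)) ℂ,
        (∀ i, IsRankOneProj (P i)) → 0 ≤ ((A' * famTensor P).trace).re := by
      intro P hP
      have hmem : famTensor P ∈ prodProjSet n d := ⟨P, hP, rfl⟩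
      have h1 : (famTensor P).trace = 1 := by
        rw [famTensor_trace]
        exact Finset.prod_eq_one fun i _ => ((hP i).isState).2
      rw [htr _ (famTensor_isHermitian fun i => (hP i).isHermitian) h1]
      have := hfT _ (subset_convexHull ℝ _ hmem)
      linarith
    have hfinal := hyp A' hermA' hpos
    rw [htr ρ hρ.1.1 hρ.2] at hfinal
    linarith

end WithNorm
end
end

section
/- Let S be a finite set of product vectors in H₁ ⊗ ... ⊗ Hₙ forming an unextendible product basis (UPB), let P be the orthogonal projection onto span(S), and let P⊥ = I − P. Then the state ρ_UPB = P⊥ / Tr(P⊥) is entangled, i.e., not n-partite separable. -/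
open Matrix
open scoped ComplexOrder

noncomputable section

/-- Tensor product `φ¹ ⊗ ... ⊗ φⁿ` of a family of vectors. -/
def productVec {n : ℕ} {d : Fin n → ℕ} (φ : ∀ i, Fin (d i) → ℂ) :
    (∀ i, Fin (d i)) → ℂ :=
  fun f => ∏ i, φ i (f i)

/-- The rank-one operator `|v⟩⟨v|`. -/
def outer {m : Type*} (v : m → ℂ) : Matrix m m ℂ := Matrix.vecMulVec v (star v)

lemma dot_productVec {n : ℕ} {d : Fin n → ℕ} (a b : ∀ i, Fin (d i) → ℂ) :
    star (productVec a) ⬝ᵥ productVec b = ∏ i, star (a i) ⬝ᵥ b i := by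
  simp only [dotProduct, Pi.star_apply, productVec, star_prod, ← Finset.prod_mul_distrib]
  rw [Fintype.prod_sum]

lemma quad_famTensor {n : ℕ} {d : Fin n → ℕ} (M : ∀ i, Matrix (Fin (d i)) (Fin (d i)) ℂ)
    (a : ∀ i, Fin (d i) → ℂ) :
    star (productVec a) ⬝ᵥ (famTensor M) *ᵥ (productVec a)
      = ∏ i, star (a i) ⬝ᵥ (M i) *ᵥ (a i) := by
  simp only [dotProduct, mulVec, Pi.star_apply, productVec, famTensor, Matrix.of_apply,
    star_prod, Finset.mul_sum, Finset.sum_mul, ← Finset.prod_mul_distrib]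
  rw [Fintype.prod_sum (fun i x => ∑ y, star (a i x) * (M i x y * a i y))]
  refine Finset.sum_congr rfl fun f _ => ?_
  rw [Fintype.prod_sum (fun i y => star (a i (f i)) * (M i (f i) y * a i y))]

lemma quad_sum {m : Type*} [Fintype m] {k : Type*} [Fintype k] (w : m → ℂ)
    (A : k → Matrix m m ℂ) :
    star w ⬝ᵥ (∑ j, A j) *ᵥ w = ∑ j, star w ⬝ᵥ (A j) *ᵥ w := by
  simp only [mulVec, dotProduct, Matrix.sum_apply, Finset.sum_mul, Finset.mul_sum]
  exact (Finset.sum_congr rfl fun x _ => Finset.sum_comm).trans Finset.sum_comm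

lemma outer_mulVec {m : Type*} [Fintype m] (u x : m → ℂ) :
    outer u *ᵥ x = (star u ⬝ᵥ x) • u := by
  ext y
  simp only [outer, mulVec, vecMulVec_apply, dotProduct, Pi.smul_apply, smul_eq_mul,
    Finset.sum_mul]
  exact Finset.sum_congr rfl fun z _ => by ring

/-- the normalized projector onto the orthogonal complement of the
span of an unextendible product basis is an entangled (non-separable) state. -/
theorem stmt16 {n m : ℕ} {d : Fin n → ℕ} (hd : ∀ i, 0 < d i)
    (v : Fin m → ∀ i, Fin (d i) → ℂ)
    (horth : ∀ j k, star (productVec (v j)) ⬝ᵥ productVec (v k)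
      = if j = k then 1 else 0)
    (hunext : ∀ φ : ∀ i, Fin (d i) → ℂ, productVec φ ≠ 0 →
      ∃ j, star (productVec (v j)) ⬝ᵥ productVec φ ≠ 0)
    (hproper : m < Fintype.card (∀ i, Fin (d i)))
    (P Pperp ρ : Matrix (∀ i, Fin (d i)) (∀ i, Fin (d i)) ℂ)
    (hP : P = ∑ j, outer (productVec (v j)))
    (hPperp : Pperp = 1 - P)
    (hρ : ρ = (Pperp.trace)⁻¹ • Pperp) :
    ¬ SepN ρ := by
  rintro ⟨K, p, σ, hp0, hp1, hσ, hsum⟩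
  -- some weight is positive
  obtain ⟨j0, hj0⟩ : ∃ j0, 0 < p j0 := by
    by_contra h
    push_neg at h
    have h0 : ∑ j, p j = 0 :=
      Finset.sum_eq_zero fun j _ => le_antisymm (h j) (hp0 j)
    rw [hp1] at h0
    exact one_ne_zero h0
  -- P fixes each basis vector
  have hPw : ∀ k0, P *ᵥ productVec (v k0) = productVec (v k0) := by
    intro k0
    rw [hP]
    have : (∑ j, outer (productVec (v j))) *ᵥ productVec (v k0)
        = ∑ j, outer (productVec (v j)) *ᵥ productVec (v k0) := by
      ext y
      simp only [mulVec, dotProduct, Matrix.sum_apply, Finset.sum_mul, Finset.sum_apply]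
      exact Finset.sum_comm
    rw [this]
    simp only [outer_mulVec, horth]
    simp
  -- the quadratic form of ρ at each basis vector vanishes
  have hquad0 : ∀ k0, star (productVec (v k0)) ⬝ᵥ ρ *ᵥ productVec (v k0) = 0 := by
    intro k0
    rw [hρ, hPperp, smul_mulVec, sub_mulVec, one_mulVec, hPw k0, sub_self,
      smul_zero, dotProduct_zero]
  -- hence the separable decomposition gives a vanishing sum of nonnegative terms
  have key : ∀ k0 j, 0 < p j →
      ∏ i, star (v k0 i) ⬝ᵥ (σ j i) *ᵥ (v k0 i) = 0 := by
    intro k0 j hj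
    have h1 := hquad0 k0
    rw [hsum, quad_sum] at h1
    have h2 : ∀ j : Fin K, star (productVec (v k0)) ⬝ᵥ ((p j : ℂ) • famTensor (σ j)) *ᵥ
        productVec (v k0) = (p j : ℂ) * ∏ i, star (v k0 i) ⬝ᵥ (σ j i) *ᵥ (v k0 i) := by
      intro j
      rw [smul_mulVec, dotProduct_smul, quad_famTensor, smul_eq_mul]
    rw [Finset.sum_congr rfl fun j _ => h2 j] at h1
    have hnn : ∀ j' : Fin K, (0:ℂ) ≤ (p j' : ℂ) * ∏ i, star (v k0 i) ⬝ᵥ (σ j' i) *ᵥ (v k0 i) := by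
      intro j'
      refine mul_nonneg (Complex.zero_le_real.mpr (hp0 j')) ?_
      exact Finset.prod_nonneg fun i _ => (hσ j' i).1.dotProduct_mulVec_nonneg (v k0 i)
    have := (Finset.sum_eq_zero_iff_of_nonneg (fun j' _ => hnn j')).mp h1 j (Finset.mem_univ j)
    have hpj : (p j : ℂ) ≠ 0 := by
      simpa using ne_of_gt hj
    exact (mul_eq_zero.mp this).resolve_left hpj
  -- so for every k0 there is an i with σ j0 i killing v k0 i
  have hker : ∀ k0, ∃ i, (σ j0 i) *ᵥ (v k0 i) = 0 := by
    intro k0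
    obtain ⟨i, _, hi⟩ := Finset.prod_eq_zero_iff.mp (key k0 j0 hj0)
    exact ⟨i, ((hσ j0 i).1.dotProduct_mulVec_zero_iff (v k0 i)).mp hi⟩
  -- each σ j0 i is nonzero, so pick u i with σ j0 i *ᵥ u i ≠ 0
  have hu : ∀ i, ∃ u, (σ j0 i) *ᵥ u ≠ 0 := by
    intro i
    by_contra h
    push_neg at h
    have hz : σ j0 i = 0 := by
      ext x y
      have := congrFun (h (Pi.single y 1)) x
      simpa [mulVec_single] using this
    have := (hσ j0 i).2
    rw [hz] at this
    simp at this
  choose u hu using hu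
  set φ : ∀ i, Fin (d i) → ℂ := fun i => (σ j0 i) *ᵥ u i with hφ
  -- productVec φ is nonzero
  have hφne : productVec φ ≠ 0 := by
    have hfi : ∀ i, ∃ x, φ i x ≠ 0 := fun i => Function.ne_iff.mp (hu i)
    choose f hf using hfi
    intro h0
    have : productVec φ f = 0 := congrFun h0 f
    rw [productVec] at this
    obtain ⟨i, _, hi⟩ := Finset.prod_eq_zero_iff.mp this
    exact hf i hi
  -- but productVec φ is orthogonal to all basis vectors: contradiction
  obtain ⟨j, hj⟩ := hunext φ hφne
  apply hj
  rw [dot_productVec]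
  obtain ⟨i, hi⟩ := hker j
  refine Finset.prod_eq_zero (Finset.mem_univ i) ?_
  have hherm : (σ j0 i)ᴴ = σ j0 i := (hσ j0 i).1.1
  rw [hφ]
  rw [dotProduct_mulVec]
  have : star (v j i) ᵥ* (σ j0 i) = 0 := by
    rw [← hherm, ← star_mulVec, hi, star_zero]
  rw [this, zero_dotProduct]
end
end
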